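/- Fix a, b > 0 with a > b, 0 < x₀ < x₁ < 1, γ > 0, and a strictly convex function Φ : ℝ → ℝ of class C² with Φ'' continuous and strictly positive, such that liminf_{w→∞} Φ''(z+w)/Φ''(w) > b/a uniformly for z in compact subsets of (0,∞), i.e., for every compact K ⊂ (0,∞) there exist W and c > b/a with Φ''(z+w)/Φ''(w) ≥ c for all z ∈ K and w ≥ W. Let 0 < T < ∞ and let D₁, D₂ : [0,T] → ℝ be continuous, differentiable on [0,T), with D₁(0), D₂(0) ≥ γ, strictly positive on [0,T), satisfying D₁'(t) = a² Φ''(u₀(t))/D₁(t)² and D₂'(t) = (a−b)(a Φ''(u₀(t)) − b Φ''(u₁(t)))/D₂(t)², where u₀(t) = a(x₁−x₀)/D₁(t) + (a−b)(1−x₁)/D₂(t) and u₁(t) = (a−b)(1−x₁)/D₂(t). Then D₂(T) > 0. -/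
import Mathlib


open MeasureTheory Set Filter Topology

/-- For the δ-source gradient-flow ODE system with `a > b` and a
strictly convex entropy with `Φ'' > 0` such that
`liminf_{w→∞} Φ''(z+w)/Φ''(w) > b/a` uniformly for `z` in compact subsets of `(0,∞)`
(for every such compact `K` there exist `W` and `c > b/a` with
`Φ''(z+w)/Φ''(w) ≥ c` for all `z ∈ K`, `w ≥ W`), one has `D₂(T) > 0`. -/
theorem stmt_18
    (a b : ℝ) (ha : 0 < a) (hb : 0 < b) (hab : b < a)
    (x₀ x₁ : ℝ) (hx₀ : 0 < x₀) (hx01 : x₀ < x₁) (hx₁ : x₁ < 1)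
    (γ : ℝ) (hγ : 0 < γ)
    (Φ : ℝ → ℝ) (hΦ : ContDiff ℝ 2 Φ) (hconv : StrictConvexOn ℝ univ Φ)
    (hΦ''pos : ∀ v : ℝ, 0 < iteratedDeriv 2 Φ v)
    (hliminf : ∀ K : Set ℝ, IsCompact K → K ⊆ Ioi 0 →
      ∃ W c : ℝ, b / a < c ∧ ∀ z ∈ K, ∀ w : ℝ, W ≤ w →
        c ≤ iteratedDeriv 2 Φ (z + w) / iteratedDeriv 2 Φ w)
    (T : ℝ) (hT : 0 < T)
    (D₁ D₂ : ℝ → ℝ)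
    (hD₁c : ContinuousOn D₁ (Icc 0 T)) (hD₂c : ContinuousOn D₂ (Icc 0 T))
    (hD₁pos : ∀ t ∈ Ico (0:ℝ) T, 0 < D₁ t) (hD₂pos : ∀ t ∈ Ico (0:ℝ) T, 0 < D₂ t)
    (hD₁0 : γ ≤ D₁ 0) (hD₂0 : γ ≤ D₂ 0)
    (u₀ u₁ : ℝ → ℝ)
    (hu₀ : ∀ t, u₀ t = a * (x₁ - x₀) / D₁ t + (a - b) * (1 - x₁) / D₂ t)
    (hu₁ : ∀ t, u₁ t = (a - b) * (1 - x₁) / D₂ t)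
    (hODE₁ : ∀ t ∈ Ico (0:ℝ) T,
      HasDerivWithinAt D₁ (a ^ 2 * iteratedDeriv 2 Φ (u₀ t) / (D₁ t) ^ 2) (Icc 0 T) t)
    (hODE₂ : ∀ t ∈ Ico (0:ℝ) T,
      HasDerivWithinAt D₂
        ((a - b) * (a * iteratedDeriv 2 Φ (u₀ t) - b * iteratedDeriv 2 Φ (u₁ t)) / (D₂ t) ^ 2)
        (Icc 0 T) t) :
    0 < D₂ T := by
  by_contra hcon
  push_neg at hcon
  have hT' : T ∈ Icc (0:ℝ) T := right_mem_Icc.mpr hT.le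
  -- D₁ is strictly monotone on [0,T]
  have hmono₁ : StrictMonoOn D₁ (Icc 0 T) := by
    apply strictMonoOn_of_deriv_pos (convex_Icc 0 T) hD₁c
    intro x hx
    rw [interior_Icc] at hx
    have hx' : x ∈ Ico (0:ℝ) T := ⟨hx.1.le, hx.2⟩
    have hd := (hODE₁ x hx').hasDerivAt (Icc_mem_nhds hx.1 hx.2)
    rw [hd.deriv]
    exact div_pos (mul_pos (pow_pos ha 2) (hΦ''pos _)) (pow_pos (hD₁pos x hx') 2)
  set A := a * (x₁ - x₀) with hA_def
  set C := (a - b) * (1 - x₁) with hC_def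
  have hA : 0 < A := mul_pos ha (sub_pos.mpr hx01)
  have hC : 0 < C := mul_pos (sub_pos.mpr hab) (sub_pos.mpr hx₁)
  set M := D₁ T with hM_def
  have hγM : γ ≤ M :=
    hD₁0.trans (hmono₁.monotoneOn (left_mem_Icc.mpr hT.le) hT' hT.le)
  have hM : 0 < M := lt_of_lt_of_le hγ hγM
  obtain ⟨W, c, hc, hWc⟩ := hliminf (Icc (A / M) (A / γ)) isCompact_Icc
    (fun x hx => lt_of_lt_of_le (div_pos hA hM) hx.1)
  set W' := max W 1 with hW'_def
  have hW' : (0:ℝ) < W' := lt_of_lt_of_le one_pos (le_max_right W 1)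
  -- D₂ T = 0
  have htendIco : Tendsto D₂ (𝓝[Ico 0 T] T) (𝓝 (D₂ T)) :=
    (hD₂c T hT').mono Ico_subset_Icc_self
  have hne : (𝓝[Ico (0:ℝ) T] T).NeBot := by
    rw [← mem_closure_iff_nhdsWithin_neBot, closure_Ico hT.ne]
    exact hT'
  have h0le : 0 ≤ D₂ T :=
    ge_of_tendsto htendIco (eventually_mem_nhdsWithin.mono fun t ht => (hD₂pos t ht).le)
  have hD2T : D₂ T = 0 := le_antisymm hcon h0le
  have htend0 : Tendsto D₂ (𝓝[Iio T] T) (𝓝 0) := by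
    rw [← hD2T, ← nhdsWithin_Ioo_eq_nhdsLT hT]
    exact htendIco.mono_left (nhdsWithin_mono T Ioo_subset_Ico_self)
  have hev : ∀ᶠ t in 𝓝[Iio T] T, D₂ t < C / W' :=
    htend0.eventually (gt_mem_nhds (div_pos hC hW'))
  obtain ⟨l, hl, hIoo⟩ := mem_nhdsLT_iff_exists_Ioo_subset.mp hev
  set m := max l 0 with hm_def
  have hmT : m < T := max_lt hl hT
  have hm0 : (0:ℝ) ≤ m := le_max_right l 0
  set s := (m + T) / 2 with hs_def
  have hms : m < s := by simp only [hs_def]; linarith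
  have hsT : s < T := by simp only [hs_def]; linarith
  have hs0 : (0:ℝ) ≤ s := le_of_lt (lt_of_le_of_lt hm0 hms)
  have hkey : ∀ t ∈ Ioo s T, 0 < deriv D₂ t := by
    intro t ht
    have ht0 : 0 < t := lt_of_le_of_lt hs0 ht.1
    have htI : t ∈ Ico (0:ℝ) T := ⟨ht0.le, ht.2⟩
    have htIcc : t ∈ Icc (0:ℝ) T := ⟨ht0.le, ht.2.le⟩
    have hD2t : 0 < D₂ t := hD₂pos t htI
    have hD1t : 0 < D₁ t := hD₁pos t htI
    have hlt : D₂ t < C / W' :=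
      hIoo ⟨lt_of_le_of_lt (le_max_left l 0) (lt_trans hms ht.1), ht.2⟩
    have hu1W : W ≤ u₁ t := by
      have h1 : D₂ t * W' < C := (lt_div_iff₀ hW').mp hlt
      have h2 : W' ≤ C / D₂ t := (le_div_iff₀ hD2t).mpr (by nlinarith)
      rw [hu₁ t]
      exact le_trans (le_max_left W 1) h2
    have hγt : γ ≤ D₁ t :=
      hD₁0.trans (hmono₁.monotoneOn (left_mem_Icc.mpr hT.le) htIcc ht0.le)
    have htM : D₁ t ≤ M := hmono₁.monotoneOn htIcc hT' ht.2.le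
    have hzK : A / D₁ t ∈ Icc (A / M) (A / γ) := by
      constructor
      · gcongr
      · gcongr
    have hc' := hWc (A / D₁ t) hzK (u₁ t) hu1W
    have hu0 : u₀ t = A / D₁ t + u₁ t := by rw [hu₀, hu₁]
    rw [← hu0] at hc'
    have hP := hΦ''pos (u₀ t)
    have hQ := hΦ''pos (u₁ t)
    have hcQ : c * iteratedDeriv 2 Φ (u₁ t) ≤ iteratedDeriv 2 Φ (u₀ t) :=
      (le_div_iff₀ hQ).mp hc'
    have hba : b < c * a := (div_lt_iff₀ ha).mp hc
    have hd := (hODE₂ t htI).hasDerivAt (Icc_mem_nhds ht0 ht.2)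
    rw [hd.deriv]
    apply div_pos _ (pow_pos hD2t 2)
    apply mul_pos (sub_pos.mpr hab)
    nlinarith [mul_le_mul_of_nonneg_left hcQ ha.le, mul_pos (sub_pos.mpr hba) hQ]
  have hmono₂ : StrictMonoOn D₂ (Icc s T) := by
    apply strictMonoOn_of_deriv_pos (convex_Icc s T)
      (hD₂c.mono (Icc_subset_Icc hs0 le_rfl))
    intro x hx
    rw [interior_Icc] at hx
    exact hkey x hx
  have h1 : D₂ s < D₂ T := hmono₂ (left_mem_Icc.mpr hsT.le) (right_mem_Icc.mpr hsT.le) hsT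
  have h2 : 0 < D₂ s := hD₂pos s ⟨hs0, hsT⟩
  linarith
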